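/- Let 0 < λ̄ and μ > 1, and let q_m(x) := 2σ Q_m(2σx − a) with σ := 1/(λ̄ − λ̄/μ) and a := (μ+1)/(μ−1), where Q_m is the polynomial of best uniform approximation to 1/(t+a) on [−1,1] by polynomials of degree at most m ≥ 1. Let A be a real symmetric N×N matrix all of whose eigenvalues lie in the interval [λ̄/μ, λ̄]. Then the spectral radius of I − q_m(A)·A satisfies ρ(I − q_m(A) A) ≤ ((μ − 1)/2) · ((√μ − 1)/(√μ + 1))ᵐ. -/

import Mathlib

open Polynomial Matrix Polynomial.Chebyshev

section helpers



variable {R : Type*} {A : Type*} [CommSemiring R] [Ring A] [Algebra R A]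

lemma spectrum_units_conj (u : Aˣ) (x : A) :
    spectrum R ((u : A) * x * ↑u⁻¹) = spectrum R x := by
  ext z
  have hkey : algebraMap R A z - (u : A) * x * ↑u⁻¹
      = (u : A) * (algebraMap R A z - x) * ↑u⁻¹ := by
    rw [mul_sub, sub_mul]
    congr 1
    rw [← Algebra.commutes]
    simp [mul_assoc]
  simp only [spectrum.mem_iff, hkey]
  rw [Units.isUnit_mul_units, Units.isUnit_units_mul]

/-- conjugation by a unit as an `AlgHom` -/
noncomputable def unitsConjAlgHom (u : Aˣ) : A →ₐ[R] A where
  toFun x := (u : A) * x * ↑u⁻¹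
  map_one' := by simp
  map_mul' x y := by
    simp only [mul_assoc]
    rw [Units.inv_mul_cancel_left]
  map_zero' := by simp
  map_add' x y := by rw [mul_add, add_mul]
  commutes' r := by
    rw [← Algebra.commutes]
    simp [mul_assoc]

lemma unitsConjAlgHom_apply (u : Aˣ) (x : A) :
    unitsConjAlgHom (R := R) u x = (u : A) * x * ↑u⁻¹ := rfl



lemma matrix_aeval_diagonal {N : ℕ} (d : Fin N → ℝ) (p : ℝ[X]) :
    aeval (Matrix.diagonal d) p = Matrix.diagonal (fun i => p.eval (d i)) := by
  have h1 : aeval (Matrix.diagonal d) p = Matrix.diagonal (aeval d p) := by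
    simpa using aeval_algHom_apply (Matrix.diagonalAlgHom (n := Fin N) (α := ℝ) ℝ) d p
  rw [h1]
  refine congrArg Matrix.diagonal (funext fun i => ?_)
  calc (aeval d p) i = (Pi.evalAlgHom ℝ (fun _ : Fin N => ℝ) i) (aeval d p) := rfl
    _ = aeval (d i) p := (aeval_algHom_apply _ d p).symm
    _ = p.eval (d i) := congrFun (coe_aeval_eq_eval (d i)) p

lemma spectrum_aeval_hermitian {N : ℕ} (A : Matrix (Fin N) (Fin N) ℝ)
    (hA : A.IsHermitian) (p : ℝ[X]) :
    spectrum ℝ (aeval A p) = (fun x => p.eval x) '' spectrum ℝ A := by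
  classical
  set U : Matrix (Fin N) (Fin N) ℝ := (hA.eigenvectorUnitary : Matrix (Fin N) (Fin N) ℝ) with hU
  have h1 : U * star U = 1 := Matrix.mem_unitaryGroup_iff.mp hA.eigenvectorUnitary.2
  have h2 : star U * U = 1 := Matrix.mem_unitaryGroup_iff'.mp hA.eigenvectorUnitary.2
  set u : (Matrix (Fin N) (Fin N) ℝ)ˣ := ⟨U, star U, h1, h2⟩ with hu
  set d : Fin N → ℝ := RCLike.ofReal ∘ hA.eigenvalues with hd
  have hAeq : A = (u : Matrix (Fin N) (Fin N) ℝ) * Matrix.diagonal d *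
      ((u⁻¹ : (Matrix (Fin N) (Fin N) ℝ)ˣ) : Matrix (Fin N) (Fin N) ℝ) :=
    hA.spectral_theorem
  have haev : aeval A p = (u : Matrix (Fin N) (Fin N) ℝ) * aeval (Matrix.diagonal d) p *
      ((u⁻¹ : (Matrix (Fin N) (Fin N) ℝ)ˣ) : Matrix (Fin N) (Fin N) ℝ) := by
    conv_lhs => rw [hAeq]
    exact aeval_algHom_apply (unitsConjAlgHom (R := ℝ) u) (Matrix.diagonal d) p
  rw [haev, spectrum_units_conj, matrix_aeval_diagonal, spectrum_diagonal]
  rw [hAeq, spectrum_units_conj, spectrum_diagonal]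
  rw [← Set.range_comp]
  rfl

lemma cheb_natDegree_le : ∀ k : ℕ, (Chebyshev.T ℝ (k : ℤ)).natDegree ≤ k := by
  have key : ∀ k : ℕ, (Chebyshev.T ℝ (k : ℤ)).natDegree ≤ k ∧
      (Chebyshev.T ℝ ((k : ℤ) + 1)).natDegree ≤ k + 1 := by
    intro k
    induction k with
    | zero => simp
    | succ n ih =>
      refine ⟨by exact_mod_cast ih.2, ?_⟩
      rw [show ((n + 1 : ℕ) : ℤ) + 1 = (n : ℤ) + 2 by push_cast; ring, Chebyshev.T_add_two]
      refine le_trans (natDegree_sub_le _ _) (max_le ?_ (le_trans ih.1 (by omega)))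
      refine le_trans natDegree_mul_le ?_
      have h1 : (2 * X : ℝ[X]).natDegree ≤ 1 :=
        le_trans natDegree_mul_le (by simp)
      have h2 : (Chebyshev.T ℝ ((n : ℤ) + 1)).natDegree ≤ n + 1 := ih.2
      omega
  exact fun k => (key k).1

lemma cheb_eval_neg (ρ : ℝ) (hρ : ρ ≠ 0) :
    ∀ k : ℕ, (Chebyshev.T ℝ (k : ℤ)).eval (-((1 + ρ ^ 2) / (2 * ρ)))
      = (-1) ^ k * (ρ ^ k + (ρ ^ k)⁻¹) / 2 := by
  have key : ∀ k : ℕ, ((Chebyshev.T ℝ (k : ℤ)).eval (-((1 + ρ ^ 2) / (2 * ρ)))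
      = (-1) ^ k * (ρ ^ k + (ρ ^ k)⁻¹) / 2) ∧
      ((Chebyshev.T ℝ ((k : ℤ) + 1)).eval (-((1 + ρ ^ 2) / (2 * ρ)))
      = (-1) ^ (k + 1) * (ρ ^ (k + 1) + (ρ ^ (k + 1))⁻¹) / 2) := by
    intro k
    induction k with
    | zero =>
      constructor
      · simp
      · rw [show ((0 : ℕ) : ℤ) + 1 = 1 by norm_num, Chebyshev.T_one]
        simp only [eval_X]
        field_simp
        ring
    | succ n ih =>
      refine ⟨by exact_mod_cast ih.2, ?_⟩
      rw [show ((n + 1 : ℕ) : ℤ) + 1 = (n : ℤ) + 2 by push_cast; ring, Chebyshev.T_add_two]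
      simp only [eval_sub, eval_mul, eval_ofNat, eval_X]
      rw [ih.1, ih.2]
      have hρn : ρ ^ n ≠ 0 := pow_ne_zero _ hρ
      rw [show n + 1 + 1 = n + 2 from rfl]
      rw [pow_succ, pow_succ, pow_succ, pow_succ]
      field_simp
      ring
  exact fun k => (key k).1

lemma cheb_W_bound (ρ t : ℝ) (hρ0 : 0 ≤ ρ) (n : ℕ) (ht : t ∈ Set.Icc (-1 : ℝ) 1) :
    |(Chebyshev.T ℝ ((n : ℤ) + 2)).eval t + 2 * ρ * (Chebyshev.T ℝ ((n : ℤ) + 1)).eval t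
      + ρ ^ 2 * (Chebyshev.T ℝ (n : ℤ)).eval t| ≤ 2 * ρ * t + 1 + ρ ^ 2 := by
  obtain ⟨ht1, ht2⟩ := ht
  set θ := Real.arccos t with hθ
  have hc : Real.cos θ = t := Real.cos_arccos ht1 ht2
  have e2 : (Chebyshev.T ℝ ((n : ℤ) + 2)).eval t = Real.cos (((n : ℝ) + 2) * θ) := by
    rw [← hc, Chebyshev.T_real_cos]; push_cast; ring_nf
  have e1 : (Chebyshev.T ℝ ((n : ℤ) + 1)).eval t = Real.cos (((n : ℝ) + 1) * θ) := by
    rw [← hc, Chebyshev.T_real_cos]; push_cast; ring_nf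
  have e0 : (Chebyshev.T ℝ (n : ℤ)).eval t = Real.cos ((n : ℝ) * θ) := by
    rw [← hc, Chebyshev.T_real_cos]; push_cast; ring_nf
  rw [e0, e1, e2]
  set α := ((n : ℝ) + 1) * θ with hα
  rw [show ((n : ℝ) + 2) * θ = α + θ by rw [hα]; ring,
    show (n : ℝ) * θ = α - θ by rw [hα]; ring, Real.cos_add, Real.cos_sub]
  have hpy1 : Real.sin α ^ 2 + Real.cos α ^ 2 = 1 := Real.sin_sq_add_cos_sq α
  have hpy2 : Real.sin θ ^ 2 + t ^ 2 = 1 := by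
    rw [← hc]; exact Real.sin_sq_add_cos_sq θ
  rw [hc]
  set c1 := Real.cos α
  set s1 := Real.sin α
  set sθ := Real.sin θ
  have hrhs : 0 ≤ 2 * ρ * t + 1 + ρ ^ 2 := by
    nlinarith [sq_nonneg (1 - ρ), mul_nonneg hρ0 (by linarith : (0:ℝ) ≤ t + 1)]
  have heq : (c1 * t - s1 * sθ + 2 * ρ * c1 + ρ ^ 2 * (c1 * t + s1 * sθ)) ^ 2
      + (c1 * ((1 - ρ ^ 2) * sθ) + s1 * ((1 + ρ ^ 2) * t + 2 * ρ)) ^ 2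
      = (2 * ρ * t + 1 + ρ ^ 2) ^ 2 := by
    linear_combination ((((1 + ρ ^ 2) * t + 2 * ρ) ^ 2 + ((1 - ρ ^ 2) * sθ) ^ 2)) * hpy1
      + (1 - ρ ^ 2) ^ 2 * hpy2
  have hsq : (c1 * t - s1 * sθ + 2 * ρ * c1 + ρ ^ 2 * (c1 * t + s1 * sθ)) ^ 2
      ≤ (2 * ρ * t + 1 + ρ ^ 2) ^ 2 := by
    nlinarith [sq_nonneg (c1 * ((1 - ρ ^ 2) * sθ) + s1 * ((1 + ρ ^ 2) * t + 2 * ρ))]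
  have hfin := Real.sqrt_le_sqrt hsq
  rwa [Real.sqrt_sq_eq_abs, Real.sqrt_sq hrhs] at hfin

end helpers

set_option maxHeartbeats 1000000 in
theorem smoother_damping_factor (N : ℕ) (lbar μ : ℝ)
    (hlbar : 0 < lbar) (hμ : 1 < μ)
    (σ a : ℝ) (hσ : σ = 1 / (lbar - lbar / μ)) (ha : a = (μ + 1) / (μ - 1))
    (m : ℕ) (hm : 1 ≤ m)
    (Qm : Polynomial ℝ) (hQmdeg : Qm.degree ≤ (m : ℕ))
    (hQmbest : ∀ Q : Polynomial ℝ, Q.degree ≤ (m : ℕ) →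
      sSup ((fun t : ℝ => |1 / (t + a) - Qm.eval t|) '' Set.Icc (-1 : ℝ) 1) ≤
        sSup ((fun t : ℝ => |1 / (t + a) - Q.eval t|) '' Set.Icc (-1 : ℝ) 1))
    (qm : Polynomial ℝ)
    (hqm : qm = C (2 * σ) * Qm.comp (C (2 * σ) * X - C a))
    (A : Matrix (Fin N) (Fin N) ℝ) (hA : A.IsSymm)
    (hspec : ∀ x ∈ spectrum ℝ A, x ∈ Set.Icc (lbar / μ) lbar) :
    ∀ z ∈ spectrum ℝ (1 - aeval A qm * A),
      |z| ≤ ((μ - 1) / 2) * ((Real.sqrt μ - 1) / (Real.sqrt μ + 1)) ^ m := by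
  have hμ0 : (0:ℝ) < μ := lt_trans one_pos hμ
  obtain ⟨n, rfl⟩ : ∃ n, m = n + 1 := ⟨m - 1, (Nat.succ_pred_eq_of_pos hm).symm⟩
  intro z hz
  set s := Real.sqrt μ with hs
  have hs1 : 1 < s := by
    rw [hs, show (1:ℝ) = Real.sqrt 1 by simp]
    exact Real.sqrt_lt_sqrt (by norm_num) hμ
  have hs2 : s ^ 2 = μ := Real.sq_sqrt hμ0.le
  set ρ := (s - 1) / (s + 1) with hρ
  have hρ0 : 0 < ρ := div_pos (by linarith) (by linarith)
  have hρ1 : ρ < 1 := by rw [hρ, div_lt_one (by linarith)]; linarith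
  have hsp1 : s + 1 ≠ 0 := by positivity
  have hsm1 : s - 1 ≠ 0 := by intro h; nlinarith
  have hμ1 : μ - 1 ≠ 0 := by intro h; nlinarith
  have hs21 : s ^ 2 - 1 ≠ 0 := by intro h; nlinarith
  have haρ : a = (1 + ρ ^ 2) / (2 * ρ) := by
    rw [ha, ← hs2, hρ]; field_simp; ring
  have hμρ : μ - 1 = 4 * ρ / (1 - ρ) ^ 2 := by
    rw [← hs2, hρ]
    have h4 : 1 - (s - 1) / (s + 1) ≠ 0 := by
      rw [sub_ne_zero]
      intro h
      have := (div_eq_one_iff_eq hsp1).mp h.symm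
      linarith
    field_simp
    ring
  clear_value s ρ
  have ha1 : 1 < a := by
    rw [haρ, lt_div_iff₀ (by positivity)]
    nlinarith [mul_pos (sub_pos.2 hρ1) (sub_pos.2 hρ1)]
  have h1ρ2 : (0:ℝ) < 1 - ρ ^ 2 := by nlinarith
  set E := 4 * ρ ^ (n + 1 + 2) / (1 - ρ ^ 2) ^ 2 with hE
  have hEpos : 0 < E := div_pos (by positivity) (by positivity)
  -- spectral mapping
  have hherm : A.IsHermitian := by
    rw [Matrix.IsHermitian, Matrix.conjTranspose_eq_transpose_of_trivial]; exact hA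
  have hmat : (1 : Matrix (Fin N) (Fin N) ℝ) - aeval A qm * A = aeval A (1 - qm * X) := by
    simp [map_sub, _root_.map_mul]
  rw [hmat, spectrum_aeval_hermitian A hherm] at hz
  obtain ⟨x, hxA, rfl⟩ := hz
  obtain ⟨hx1, hx2⟩ := hspec x hxA
  have hevalz : (1 - qm * X : ℝ[X]).eval x = 1 - qm.eval x * x := by simp
  simp only [hevalz]
  -- parameter t
  have hσpos : 0 < σ := by
    rw [hσ]
    have : lbar / μ < lbar := div_lt_self hlbar hμ
    have h0 : 0 < lbar - lbar / μ := by
      have : lbar / μ < lbar := div_lt_self hlbar hμ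
      linarith
    positivity
  set t := 2 * σ * x - a with htdef
  have hden2 : μ * lbar - lbar ≠ 0 := by
    have he : μ * lbar - lbar = (μ - 1) * lbar := by ring
    rw [he]; exact mul_ne_zero hμ1 hlbar.ne'
  have hden3 : -(μ * lbar) + μ ^ 2 * lbar ≠ 0 := by
    have he : -(μ * lbar) + μ ^ 2 * lbar = μ * (μ * lbar - lbar) := by ring
    rw [he]; exact mul_ne_zero hμ0.ne' hden2
  have h2σl : 2 * σ * lbar = a + 1 := by
    rw [hσ, ha]; field_simp [hden2]
    ring_nf
  have h2σl2 : 2 * σ * (lbar / μ) = a - 1 := by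
    rw [hσ, ha]; field_simp [hden2, hden3]
    ring_nf
  have ht : t ∈ Set.Icc (-1:ℝ) 1 := by
    constructor
    · have h := mul_le_mul_of_nonneg_left hx1 (by positivity : (0:ℝ) ≤ 2 * σ)
      rw [h2σl2] at h
      rw [htdef]; linarith
    · have h := mul_le_mul_of_nonneg_left hx2 (by positivity : (0:ℝ) ≤ 2 * σ)
      rw [h2σl] at h
      rw [htdef]; linarith
  have htapos : 0 < t + a := by
    obtain ⟨h1, _⟩ := ht; linarith
  have hqmx : qm.eval x = 2 * σ * Qm.eval t := by
    rw [hqm]; simp [eval_comp, htdef]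
  have hkey : 1 - qm.eval x * x = 1 - (t + a) * Qm.eval t := by
    rw [hqmx]
    have hta : t + a = 2 * σ * x := by rw [htdef]; ring
    rw [hta]; ring
  -- witness polynomial
  set W : ℝ[X] := Chebyshev.T ℝ ((n:ℤ)+2) + C (2*ρ) * Chebyshev.T ℝ ((n:ℤ)+1)
      + C (ρ^2) * Chebyshev.T ℝ (n:ℤ) with hW
  set ε := (-1 : ℝ) ^ n with hε
  set c0 := E / (2*ρ) with hc0
  set Rp : ℝ[X] := C (ε * c0) * W with hRp
  have hεsq : ε * ε = 1 := by
    rw [hε, ← pow_add]; exact Even.neg_one_pow ⟨n, rfl⟩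
  have hρn : ρ ^ n ≠ 0 := pow_ne_zero _ hρ0.ne'
  have hcheb := cheb_eval_neg ρ hρ0.ne'
  have hWa : W.eval (-a) = ε * ((ρ ^ n)⁻¹ * (1 - ρ^2)^2 / (2 * ρ^2)) := by
    rw [hW]; simp only [eval_add, eval_mul, eval_C]
    rw [haρ]
    rw [show ((n:ℤ)+2) = ((n+2:ℕ):ℤ) by push_cast; ring,
        show ((n:ℤ)+1) = ((n+1:ℕ):ℤ) by push_cast; ring]
    rw [hcheb (n+2), hcheb (n+1), hcheb n, hε]
    rw [show n+2 = n+1+1 from rfl, pow_succ, pow_succ, pow_succ ρ n, pow_succ,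
        pow_succ, pow_succ]
    field_simp
    ring
  have hRa : Rp.eval (-a) = 1 := by
    rw [hRp]; simp only [eval_mul, eval_C]; rw [hWa]
    rw [show ε * c0 * (ε * ((ρ ^ n)⁻¹ * (1 - ρ^2)^2 / (2 * ρ^2)))
        = (ε * ε) * (c0 * ((ρ ^ n)⁻¹ * (1 - ρ^2)^2 / (2 * ρ^2))) by ring, hεsq, one_mul]
    rw [hc0, hE]
    rw [show n+1+2 = n+1+1+1 from rfl, pow_succ, pow_succ, pow_succ]
    field_simp
    ring
  set Qw : ℝ[X] := (1 - Rp) /ₘ (X - C (-a)) with hQw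
  have hfact : (X - C (-a)) * Qw = 1 - Rp := by
    have hmod := modByMonic_add_div (1 - Rp) (X - C (-a))
    rw [modByMonic_X_sub_C_eq_C_eval] at hmod
    have heval0 : (1 - Rp).eval (-a) = 0 := by simp [hRa]
    rw [heval0, map_zero, zero_add] at hmod
    exact hmod
  -- degree bound
  have hdegQw : Qw.degree ≤ ((n + 1 : ℕ) : WithBot ℕ) := by
    by_cases hQ0 : Qw = 0
    · rw [hQ0, degree_zero]; exact bot_le
    · have hdW : W.natDegree ≤ n + 2 := by
        rw [hW]
        refine le_trans (natDegree_add_le _ _) (max_le (le_trans (natDegree_add_le _ _)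
          (max_le ?_ ?_)) ?_)
        · rw [show ((n:ℤ)+2) = ((n+2:ℕ):ℤ) by push_cast; ring]
          exact cheb_natDegree_le (n+2)
        · refine le_trans (natDegree_C_mul_le _ _) ?_
          rw [show ((n:ℤ)+1) = ((n+1:ℕ):ℤ) by push_cast; ring]
          exact le_trans (cheb_natDegree_le (n+1)) (by omega)
        · refine le_trans (natDegree_C_mul_le _ _) ?_
          exact le_trans (cheb_natDegree_le n) (by omega)
      have hdR : (1 - Rp).natDegree ≤ n + 2 := by
        refine le_trans (natDegree_sub_le _ _) (max_le (by simp) ?_)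
        rw [hRp]
        exact le_trans (natDegree_C_mul_le _ _) hdW
      have hXC : (X - C (-a) : ℝ[X]) ≠ 0 := X_sub_C_ne_zero (-a)
      have hmul : ((X - C (-a)) * Qw).natDegree = 1 + Qw.natDegree := by
        rw [natDegree_mul hXC hQ0, natDegree_X_sub_C]
      rw [hfact] at hmul
      have hnd : Qw.natDegree ≤ n + 1 := by omega
      exact le_trans degree_le_natDegree (by exact_mod_cast hnd)
  -- pointwise bound for the witness
  have hpoint : ∀ t' ∈ Set.Icc (-1:ℝ) 1, |1/(t'+a) - Qw.eval t'| ≤ E := by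
    intro t' ht'
    obtain ⟨ht'1, ht'2⟩ := ht'
    have hta' : 0 < t' + a := by linarith
    have hev : (t' + a) * Qw.eval t' = 1 - Rp.eval t' := by
      have h := congrArg (eval t') hfact
      simp only [eval_mul, eval_sub, eval_X, eval_C, eval_one] at h
      rw [sub_neg_eq_add] at h
      exact h
    have hinv : (t'+a) * (t'+a)⁻¹ = 1 := mul_inv_cancel₀ hta'.ne'
    have herr : 1/(t'+a) - Qw.eval t' = Rp.eval t' / (t'+a) := by
      rw [eq_div_iff hta'.ne']
      linear_combination hinv - hev
    rw [herr, abs_div, abs_of_pos hta', div_le_iff₀ hta']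
    have hWbd : |W.eval t'| ≤ 2*ρ*t' + 1 + ρ^2 := by
      have h := cheb_W_bound ρ t' hρ0.le n ⟨ht'1, ht'2⟩
      rw [hW]; simp only [eval_add, eval_mul, eval_C]
      exact h
    have habs : |ε * c0| = E/(2*ρ) := by
      rw [hε, hc0, abs_mul, abs_pow, abs_neg, abs_one, one_pow, one_mul,
        abs_of_pos (div_pos hEpos (by positivity))]
    have hRpt : |Rp.eval t'| ≤ (E/(2*ρ)) * (2*ρ*t' + 1 + ρ^2) := by
      rw [hRp]; simp only [eval_mul, eval_C]
      rw [abs_mul, habs]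
      exact mul_le_mul_of_nonneg_left hWbd (le_of_lt (div_pos hEpos (by positivity)))
    refine le_trans hRpt (le_of_eq ?_)
    have h2 : 2*ρ*t' + 1 + ρ^2 = 2*ρ*(t'+a) := by
      rw [haρ]; field_simp; ring
    rw [h2]
    field_simp
  -- sup bounds
  have hbdd : BddAbove ((fun t' : ℝ => |1/(t'+a) - Qm.eval t'|) '' Set.Icc (-1:ℝ) 1) := by
    apply IsCompact.bddAbove_image isCompact_Icc
    apply ContinuousOn.abs
    apply ContinuousOn.sub
    · apply ContinuousOn.div continuousOn_const (by fun_prop)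
      intro t' ht'
      obtain ⟨h1, _⟩ := ht'
      have : 0 < t' + a := by linarith
      exact this.ne'
    · exact (Polynomial.continuous Qm).continuousOn
  have hQmt : |1/(t+a) - Qm.eval t|
      ≤ sSup ((fun t' : ℝ => |1/(t'+a) - Qm.eval t'|) '' Set.Icc (-1:ℝ) 1) :=
    le_csSup hbdd (Set.mem_image_of_mem _ ht)
  have hsupQ : sSup ((fun t' : ℝ => |1/(t'+a) - Qw.eval t'|) '' Set.Icc (-1:ℝ) 1) ≤ E :=
    Real.sSup_le (by rintro y ⟨t', ht', rfl⟩; exact hpoint t' ht') hEpos.le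
  have hchain : |1/(t+a) - Qm.eval t| ≤ E :=
    le_trans hQmt (le_trans (hQmbest Qw hdegQw) hsupQ)
  -- conclude
  rw [hkey]
  have hsplit : 1 - (t+a) * Qm.eval t = (t+a) * (1/(t+a) - Qm.eval t) := by
    rw [mul_sub, mul_one_div, div_self htapos.ne']
  rw [hsplit, abs_mul, abs_of_pos htapos]
  have hQfinal : (t+a) * |1/(t+a) - Qm.eval t| ≤ (1+a) * E := by
    apply mul_le_mul _ hchain (abs_nonneg _) (by linarith)
    obtain ⟨_, h2⟩ := ht; linarith
  refine le_trans hQfinal (le_of_eq ?_)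
  have hc : ρ*2 - ρ^3*4 + ρ^5*2 ≠ 0 := by
    have he : ρ*2 - ρ^3*4 + ρ^5*2 = 2*ρ*(1-ρ^2)^2 := by ring
    rw [he]
    exact mul_ne_zero (mul_ne_zero two_ne_zero hρ0.ne') (pow_ne_zero _ h1ρ2.ne')
  have hone : (1:ℝ) - ρ ≠ 0 := by intro h; nlinarith
  rw [haρ, hμρ, hE, show n+1+2 = n+1+1+1 from rfl, pow_succ, pow_succ]
  field_simp [hone, h1ρ2.ne', hρ0.ne']
  ring
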